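/- arXiv:1108.2083 — 2 statements merged into one kernel-verified Lean document; each statement's English description precedes it below -/
import Mathlib

section
/- Let M be an R-module that is PSD for an ideal I of R. Then any direct summand of M is PSD for I. -/
open Submodule Function LinearMap

universe u v w x y

universe u_1 u_2

section Defs

variable (R : Type u) [Ring R]

/-- `I` (a left ideal) is a two-sided ideal. -/
def IsTwoSidedI (I : Ideal R) : Prop := ∀ a b : R, a ∈ I → a * b ∈ I

variable {M : Type v} [AddCommGroup M] [Module R M]

/-- `N` is PSD in the submodule `T` of `M` (taking `T = ⊤` gives "PSD in `M`"):
whenever `N + X = T`, there is a projective direct summand `S` of `T` with `S ≤ N`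
and `T = S ⊕ X`. -/
def PSDIn (T N : Submodule R M) : Prop :=
  ∀ X : Submodule R M, X ≤ T → N ⊔ X = T →
    ∃ S : Submodule R M, Module.Projective R S ∧ S ≤ N ∧ S ⊔ X = T ∧ S ⊓ X = ⊥

/-- `M` is PSD for the ideal `I`: every submodule of `IM` is PSD in `M`. -/
def PSDFor (I : Ideal R) (M : Type v) [AddCommGroup M] [Module R M] : Prop :=
  ∀ N : Submodule R M, N ≤ I • (⊤ : Submodule R M) → PSDIn R ⊤ N

/-- `R` is a left PSD ring for `I`: every finitely generated free left `R`-module is PSD for `I`. -/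
def PSDRing (I : Ideal R) : Prop :=
  ∀ (F : Type u) [AddCommGroup F] [Module R F] [Module.Free R F] [Module.Finite R F],
    PSDFor R I F

/-- `f : P → M` is a projective `I`-cover. -/
def IsProjICover (I : Ideal R) {P : Type w} [AddCommGroup P] [Module R P]
    (f : P →ₗ[R] M) : Prop :=
  Surjective f ∧ Module.Projective R P ∧
    LinearMap.ker f ≤ I • (⊤ : Submodule R P) ∧ PSDIn R ⊤ (LinearMap.ker f)

/-- A projective `I`-cover of `M`. -/
structure ProjICover (I : Ideal R) (M : Type v) [AddCommGroup M] [Module R M] where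
  P : Type w
  [addP : AddCommGroup P]
  [modP : Module R P]
  f : P →ₗ[R] M
  cover : IsProjICover R I f

/-- `R` is `I`-semiregular. -/
def ISemiregular (I : Ideal R) : Prop :=
  ∀ a : R, ∃ P Q : Submodule R R, IsCompl P Q ∧ Module.Projective R P ∧
    P ≤ Submodule.span R {a} ∧ Submodule.span R {a} ⊓ Q ≤ I

/-- `R` is `I`-semiperfect. -/
def ISemiperfect (I : Ideal R) : Prop :=
  ∀ K : Submodule R R, ∃ A B : Submodule R R, IsCompl A B ∧ Module.Projective R A ∧
    A ≤ K ∧ K ⊓ B ≤ I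

end Defs




section Defs2

variable (R : Type u) [Ring R]
variable {M : Type v} [AddCommGroup M] [Module R M]

/-- A submodule `S` is small in the submodule `T` (take `T = ⊤` for "small in `M`"). -/
def SmallIn (T S : Submodule R M) : Prop :=
  ∀ X : Submodule R M, X ≤ T → S ⊔ X = T → X = T

/-- `K` is DM in the submodule `T` of `M`: whenever `K + X = T` there is a direct
summand `S` of `T` with `S ≤ K` and `S + X = T`. -/
def DMIn (T K : Submodule R M) : Prop :=
  ∀ X : Submodule R M, X ≤ T → K ⊔ X = T →
    ∃ S : Submodule R M, S ≤ K ∧ (∃ S' : Submodule R M, S ⊔ S' = T ∧ S ⊓ S' = ⊥) ∧ S ⊔ X = T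

/-- `M` is DM for `I`: every submodule of `IM` is DM in `M`. -/
def DMFor (I : Ideal R) (M : Type v) [AddCommGroup M] [Module R M] : Prop :=
  ∀ K : Submodule R M, K ≤ I • (⊤ : Submodule R M) → DMIn R ⊤ K

/-- `R` is a left DM ring for `I`. -/
def DMRing (I : Ideal R) : Prop :=
  ∀ (F : Type u) [AddCommGroup F] [Module R F] [Module.Free R F] [Module.Finite R F],
    DMFor R I F

/-- `M` is an `I`-supplemented module. -/
def ISupplemented (I : Ideal R) (M : Type v) [AddCommGroup M] [Module R M] : Prop :=
  ∀ X : Submodule R M, ∃ Y : Submodule R M, Module.Projective R Y ∧ X ⊔ Y = ⊤ ∧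
    X ⊓ Y ≤ I • Y ∧ DMIn R Y (X ⊓ Y)

/-- `M` is a finitely `I`-supplemented module. -/
def FinISupplemented (I : Ideal R) (M : Type v) [AddCommGroup M] [Module R M] : Prop :=
  ∀ X : Submodule R M, X.FG → ∃ Y : Submodule R M, Module.Projective R Y ∧ X ⊔ Y = ⊤ ∧
    X ⊓ Y ≤ I • Y ∧ DMIn R Y (X ⊓ Y)

/-- `M` is a supplemented module. -/
def Supplemented (M : Type v) [AddCommGroup M] [Module R M] : Prop :=
  ∀ X : Submodule R M, ∃ Y : Submodule R M, X ⊔ Y = ⊤ ∧ SmallIn R Y (X ⊓ Y)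

/-- `M` is an `I`-semiperfect module. -/
def ISemiperfectMod (I : Ideal R) (M : Type v) [AddCommGroup M] [Module R M] : Prop :=
  ∀ K : Submodule R M, ∃ A B : Submodule R M, IsCompl A B ∧ Module.Projective R A ∧
    A ≤ K ∧ K ⊓ B ≤ I • (⊤ : Submodule R M)

/-- The radical of `M`: the intersection of all maximal submodules. -/
def RadM (M : Type v) [AddCommGroup M] [Module R M] : Submodule R M :=
  sInf {N : Submodule R M | IsCoatom N}

/-- The socle of `M`: the sum of all simple submodules. -/
def SocM (M : Type v) [AddCommGroup M] [Module R M] : Submodule R M :=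
  sSup {N : Submodule R M | IsSimpleModule R N}

/-- `P` is locally projective (lifting version). -/
def LocallyProjective (P : Type w) [AddCommGroup P] [Module R P] : Prop :=
  ∀ (A : Type x) (B : Type y) [AddCommGroup A] [Module R A] [AddCommGroup B] [Module R B]
    (g : A →ₗ[R] B) (f : P →ₗ[R] B), Surjective g →
      ∀ P₀ : Submodule R P, P₀.FG → ∃ h : P →ₗ[R] A, ∀ p ∈ P₀, f p = g (h p)

/-- `P` is locally projective (splitting version). -/
def LocallyProjectiveB (P : Type w) [AddCommGroup P] [Module R P] : Prop :=
  ∀ (N : Type x) [AddCommGroup N] [Module R N] (g : N →ₗ[R] P), Surjective g →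
    ∀ P₀ : Submodule R P, P₀.FG → ∃ h : P →ₗ[R] N, ∀ p ∈ P₀, g (h p) = p


/-- A locally projective `I`-cover of `M`. -/
structure LocProjICover (I : Ideal R) (M : Type v) [AddCommGroup M] [Module R M] where
  P : Type w
  [addP : AddCommGroup P]
  [modP : Module R P]
  f : P →ₗ[R] M
  surj : Surjective f
  locProj : LocallyProjective.{u, w, u_1, u_2} R P
  ker_le : LinearMap.ker f ≤ I • (⊤ : Submodule R P)
  psd : PSDIn R ⊤ (LinearMap.ker f)

/-- A locally projective cover of `M`. -/
structure LocProjCover (M : Type v) [AddCommGroup M] [Module R M] where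
  P : Type w
  [addP : AddCommGroup P]
  [modP : Module R P]
  f : P →ₗ[R] M
  surj : Surjective f
  locProj : LocallyProjective.{u, w, u_1, u_2} R P
  ker_small : SmallIn R ⊤ (LinearMap.ker f)

/-- A projective cover of `M`. -/
structure ProjCover (M : Type v) [AddCommGroup M] [Module R M] where
  P : Type w
  [addP : AddCommGroup P]
  [modP : Module R P]
  f : P →ₗ[R] M
  surj : Surjective f
  proj : Module.Projective R P
  ker_small : SmallIn R ⊤ (LinearMap.ker f)

/-- `M` is self-projective (quasi-projective). -/
def SelfProjective (M : Type v) [AddCommGroup M] [Module R M] : Prop :=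
  ∀ (K : Submodule R M) (f : M →ₗ[R] M ⧸ K), ∃ h : M →ₗ[R] M, K.mkQ ∘ₗ h = f

/-- A projectivity class of `R`-modules (in a fixed universe). -/
def ProjectivityClass
    (Pc : ∀ (N : Type w) [AddCommGroup N] [Module R N], Prop) : Prop :=
  (∀ (N : Type w) [AddCommGroup N] [Module R N], SelfProjective R N → Pc N) ∧
  (∀ (N P : Type w) [AddCommGroup N] [Module R N] [AddCommGroup P] [Module R P]
      (f : P →ₗ[R] N), Surjective f → Module.Projective R P → Pc (P × N) →
        Module.Projective R N)

/-- `Pc` is closed under direct summands. -/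
def ClosedUnderSummands
    (Pc : ∀ (N : Type w) [AddCommGroup N] [Module R N], Prop) : Prop :=
  ∀ (N P : Type w) [AddCommGroup N] [Module R N] [AddCommGroup P] [Module R P],
    Pc P → ∀ (i : N →ₗ[R] P) (p : P →ₗ[R] N), p ∘ₗ i = LinearMap.id → Pc N

/-- A `Pc`-projective `I`-cover of `M`. -/
structure PProjICover (Pc : ∀ (N : Type w) [AddCommGroup N] [Module R N], Prop)
    (I : Ideal R) (M : Type v) [AddCommGroup M] [Module R M] where
  Q : Type w
  [addQ : AddCommGroup Q]
  [modQ : Module R Q]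
  g : Q →ₗ[R] M
  surj : Surjective g
  memP : Pc Q
  ker_le : LinearMap.ker g ≤ I • (⊤ : Submodule R Q)
  psd : PSDIn R ⊤ (LinearMap.ker g)

end Defs2

theorem stmt1 {R : Type u} [Ring R] {M : Type v} [AddCommGroup M] [Module R M]
    (I : Ideal R) (hI : IsTwoSidedI R I) (hM : PSDFor R I M)
    (N : Submodule R M) (hN : ∃ N' : Submodule R M, IsCompl N N') :
    PSDFor R I N := by
  intro K hK X _ hKX
  obtain ⟨N', hNN'⟩ := hN
  have hinj : Injective N.subtype := N.injective_subtype
  have hmapinj := Submodule.map_injective_of_injective hinj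
  have hK' : K.map N.subtype ≤ I • (⊤ : Submodule R M) := by
    calc K.map N.subtype ≤ (I • (⊤ : Submodule R N)).map N.subtype :=
          Submodule.map_mono hK
      _ = I • (⊤ : Submodule R N).map N.subtype := Submodule.map_smul'' _ _ _
      _ ≤ I • (⊤ : Submodule R M) := smul_mono_right _ le_top
  have hsup : K.map N.subtype ⊔ (X.map N.subtype ⊔ N') = ⊤ := by
    rw [← sup_assoc, ← Submodule.map_sup, hKX, Submodule.map_top, Submodule.range_subtype]
    exact hNN'.sup_eq_top
  obtain ⟨S, hSproj, hSK, hSX, hSbot⟩ := hM (K.map N.subtype) hK'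
    (X.map N.subtype ⊔ N') le_top hsup
  have hSN : S ≤ N := hSK.trans (Submodule.map_subtype_le N K)
  refine ⟨S.comap N.subtype, ?_, ?_, ?_, ?_⟩
  · exact Module.Projective.of_equiv (Submodule.comapSubtypeEquivOfLe hSN).symm
  · intro x hx
    have : N.subtype x ∈ K.map N.subtype := hSK hx
    obtain ⟨y, hy, hyx⟩ := this
    rwa [show y = x from hinj hyx] at hy
  · apply hmapinj
    rw [Submodule.map_sup, Submodule.map_comap_subtype, inf_of_le_right hSN,
      Submodule.map_top, Submodule.range_subtype]
    apply le_antisymm (sup_le hSN (Submodule.map_subtype_le N X))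
    intro n hn
    have : (n : M) ∈ S ⊔ (X.map N.subtype ⊔ N') := hSX ▸ Submodule.mem_top
    obtain ⟨s, hs, z, hz, hsz⟩ := Submodule.mem_sup.mp this
    obtain ⟨x, hx, n', hn', hxn'⟩ := Submodule.mem_sup.mp hz
    have hsN : s ∈ N := hSN hs
    have hxN : x ∈ N := Submodule.map_subtype_le N X hx
    have hn'0 : n' = 0 := by
      have : n' ∈ N ⊓ N' := ⟨by
        have : n' = n - s - x := by rw [← hsz, ← hxn']; abel
        rw [this]; exact sub_mem (sub_mem hn hsN) hxN, hn'⟩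
      simpa [hNN'.inf_eq_bot] using this
    have : (n : M) = s + x := by rw [← hsz, ← hxn', hn'0, add_zero]
    rw [this]
    exact Submodule.add_mem_sup hs hx
  · apply hmapinj
    rw [Submodule.map_inf _ hinj, Submodule.map_comap_subtype, inf_of_le_right hSN,
      Submodule.map_bot]
    exact le_antisymm (le_trans (inf_le_inf_left S le_sup_left) hSbot.le) bot_le
end

section
/- Let I be an ideal of R with I ⊆ Soc(_R R). Then any submodule of IM is PSD in M for every finitely generated free left R-module M; in particular, R is a left PSD ring for I. -/
open Submodule Function LinearMap

universe u v w x y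
universe u_1 u_2

section AuxSoc

variable {R : Type u} [Ring R] {M : Type v} [AddCommGroup M] [Module R M]

lemma socM_semisimple : IsSemisimpleModule R ↥(SocM R M) := by
  rw [SocM, sSup_eq_iSup]
  exact isSemisimpleModule_biSup_of_isSemisimpleModule_submodule
    (fun m hm => by haveI : IsSimpleModule R m := hm; infer_instance)

lemma le_socM (T : Submodule R M) (hT : IsSemisimpleModule R ↥T) : T ≤ SocM R M := by
  have h := IsSemisimpleModule.sSup_simples_eq_top R ↥T
  have hTm : T = Submodule.map T.subtype ⊤ := by
    rw [Submodule.map_top, Submodule.range_subtype]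
  rw [hTm, ← h, sSup_eq_iSup', Submodule.map_iSup]
  refine iSup_le fun m => le_sSup ?_
  have e := (Submodule.equivMapOfInjective T.subtype T.injective_subtype m).symm
  haveI : IsSimpleModule R m := m.2
  exact IsSimpleModule.congr e

lemma range_le_socM {N : Type w} [AddCommGroup N] [Module R N]
    [IsSemisimpleModule R M] (f : M →ₗ[R] N) : LinearMap.range f ≤ SocM R N :=
  le_socM _ (IsSemisimpleModule.range f)

end AuxSoc

theorem stmt19 {R : Type u} [Ring R] (I : Ideal R) (hI : IsTwoSidedI R I)
    (hsoc : (I : Submodule R R) ≤ SocM R R) :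
    PSDRing R I := by
  intro F _ _ _ _ N hN X _hX hNX
  haveI : IsSemisimpleModule R ↥(SocM R R) := socM_semisimple
  -- Step 1: `I • ⊤ ≤ Soc F`.
  have hIF : (I • (⊤ : Submodule R F)) ≤ SocM R F := by
    rw [Submodule.smul_le]
    intro a ha m _
    have hr := range_le_socM
      (f := (LinearMap.toSpanSingleton R F m).comp (SocM R R).subtype)
    exact hr ⟨⟨a, hsoc ha⟩, rfl⟩
  have hNT : N ≤ SocM R F := hN.trans hIF
  haveI hTss : IsSemisimpleModule R ↥(SocM R F) := socM_semisimple
  -- Step 2: `N` is a semisimple module.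
  haveI hNss : IsSemisimpleModule R ↥N := by
    have e := Submodule.comap_equiv_self_of_inj_of_le
      (SocM R F).injective_subtype (p := N)
      (by rw [Submodule.range_subtype]; exact hNT)
    exact IsSemisimpleModule.congr e.symm
  -- Step 3: pick a complement `S` of `N ⊓ X` inside `N`.
  obtain ⟨S', hS'⟩ := exists_isCompl ((N ⊓ X).comap N.subtype)
  set S := S'.map N.subtype with hSdef
  have hSN : S ≤ N := Submodule.map_subtype_le _ _
  have hmapK : Submodule.map N.subtype ((N ⊓ X).comap N.subtype) = N ⊓ X := by
    rw [Submodule.map_comap_subtype]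
    exact inf_eq_right.mpr inf_le_left
  have hsup : S ⊔ (N ⊓ X) = N := by
    rw [hSdef, ← hmapK, ← Submodule.map_sup, codisjoint_iff.mp hS'.symm.codisjoint,
      Submodule.map_top, Submodule.range_subtype]
  have hinf : S ⊓ (N ⊓ X) = ⊥ := by
    rw [hSdef, ← hmapK, ← Submodule.map_inf _ N.injective_subtype,
      disjoint_iff.mp hS'.symm.disjoint, Submodule.map_bot]
  have hsupX : S ⊔ X = ⊤ := by
    have h1 : S ⊔ ((N ⊓ X) ⊔ X) = ⊤ := by rw [← sup_assoc, hsup, hNX]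
    rwa [show (N ⊓ X) ⊔ X = X from sup_eq_right.mpr inf_le_right] at h1
  have hinfX : S ⊓ X = ⊥ := by
    rw [← inf_assoc, inf_eq_left.mpr hSN] at hinf
    exact hinf
  have hcompl : IsCompl S X := ⟨disjoint_iff.mpr hinfX, codisjoint_iff.mpr hsupX⟩
  -- Step 4: `S` is a direct summand of the free module `F`, hence projective.
  have hproj : Module.Projective R ↥S :=
    Module.Projective.of_split S.subtype (Submodule.linearProjOfIsCompl S X hcompl)
      (Submodule.linearProjOfIsCompl_comp_subtype hcompl)
  exact ⟨S, hproj, hSN, hsupX, hinfX⟩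
end
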